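/- If G is a connected graph with exactly one positive anti-adjacency eigenvalue, then G contains no induced subgraph isomorphic to the disjoint union of a path on three vertices and an isolated vertex (P_3 ∪ K_1). -/

import Mathlib

/-- The eccentricity of a vertex `u` in a graph `G`: the maximum distance from `u`. -/
noncomputable def ecc {V : Type*} [Fintype V] (G : SimpleGraph V) (u : V) : ℕ :=
  Finset.univ.sup (G.dist u)

/-- The anti-adjacency (eccentricity) matrix of a graph: the `(u,v)` entry is `d_G(u,v)`
if `d_G(u,v) = min (ε_G(u)) (ε_G(v))`, and `0` otherwise. -/
noncomputable def antiAdj {V : Type*} [Fintype V] (G : SimpleGraph V) : Matrix V V ℝ :=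
  Matrix.of fun u v =>
    if G.dist u v = min (ecc G u) (ecc G v) then (G.dist u v : ℝ) else 0

open Finset Matrix

private lemma dot_symm {V : Type*} [Fintype V] {A : Matrix V V ℝ}
    (hH : A.IsHermitian) (x y : V → ℝ) : y ⬝ᵥ A *ᵥ x = x ⬝ᵥ A *ᵥ y := by
  have he : ∀ i j, A j i = A i j := fun i j => by simpa using hH.apply i j
  simp only [Matrix.mulVec, dotProduct, Finset.mul_sum]
  rw [Finset.sum_comm]
  exact Finset.sum_congr rfl fun i _ => Finset.sum_congr rfl fun j _ => by
    rw [he j i]; ring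

private lemma quadform_expand {V : Type*} [Fintype V] {A : Matrix V V ℝ}
    (hH : A.IsHermitian) (x y : V → ℝ) (s t : ℝ) :
    (s • x + t • y) ⬝ᵥ A *ᵥ (s • x + t • y)
      = s^2 * (x ⬝ᵥ A *ᵥ x) + 2*s*t*(x ⬝ᵥ A *ᵥ y) + t^2 * (y ⬝ᵥ A *ᵥ y) := by
  simp only [Matrix.mulVec_add, Matrix.mulVec_smul, dotProduct_add,
    add_dotProduct, dotProduct_smul, smul_dotProduct, smul_eq_mul]
  rw [dot_symm hH x y]; ring

private lemma quad_pos {Qx Qy B s t : ℝ} (hx : 0 < Qx) (hy : 0 < Qy)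
    (hB : B^2 < Qx*Qy) (hst : ¬(s = 0 ∧ t = 0)) :
    0 < s^2*Qx + 2*s*t*B + t^2*Qy := by
  rcases eq_or_ne t 0 with rfl | ht
  · have hs : s ≠ 0 := fun h => hst ⟨h, rfl⟩
    have : 0 < s^2 := by positivity
    nlinarith
  · have ht2 : 0 < t^2 := by positivity
    nlinarith [sq_nonneg (s*Qx + t*B), mul_pos ht2 (sub_pos.mpr hB)]

private lemma two_le_card_pos {V : Type*} [Fintype V] [DecidableEq V]
    {A : Matrix V V ℝ} (hH : A.IsHermitian) (x y : V → ℝ)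
    (hx : 0 < x ⬝ᵥ A *ᵥ x) (hy : 0 < y ⬝ᵥ A *ᵥ y)
    (hxy : (x ⬝ᵥ A *ᵥ y)^2 < (x ⬝ᵥ A *ᵥ x) * (y ⬝ᵥ A *ᵥ y)) :
    2 ≤ (Finset.univ.filter (fun i => 0 < hH.eigenvalues i)).card := by
  by_contra hcon
  push_neg at hcon
  have hne : Nonempty V := by
    by_contra h
    rw [not_nonempty_iff] at h
    simp [dotProduct] at hx
  obtain ⟨i₀, hi₀⟩ : ∃ i₀ : V, ∀ i, i ≠ i₀ → hH.eigenvalues i ≤ 0 := by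
    rcases (Finset.univ.filter (fun i => 0 < hH.eigenvalues i)).eq_empty_or_nonempty with h | ⟨j, hj⟩
    · refine ⟨Classical.arbitrary V, fun i _ => ?_⟩
      by_contra hpos
      push_neg at hpos
      have : i ∈ Finset.univ.filter (fun i => 0 < hH.eigenvalues i) :=
        Finset.mem_filter.mpr ⟨Finset.mem_univ _, hpos⟩
      simp [h] at this
    · refine ⟨j, fun i hi => ?_⟩
      by_contra hpos
      push_neg at hpos
      have hmem : i ∈ Finset.univ.filter (fun i => 0 < hH.eigenvalues i) :=
        Finset.mem_filter.mpr ⟨Finset.mem_univ _, hpos⟩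
      have : 1 < (Finset.univ.filter (fun i => 0 < hH.eigenvalues i)).card :=
        Finset.one_lt_card.mpr ⟨i, hmem, j, hj, hi⟩
      omega
  set b := hH.eigenvectorBasis with hb
  have hinner : ∀ p q : EuclideanSpace ℝ V, (@inner ℝ _ _ p q) = (p : V → ℝ) ⬝ᵥ (q : V → ℝ) := by
    intro p q
    simp [PiLp.inner_apply, dotProduct, RCLike.inner_apply, starRingEnd_apply, mul_comm]
  have hrepr : ∀ (z : EuclideanSpace ℝ V) (i : V),
      b.repr (WithLp.toLp 2 (A *ᵥ z : V → ℝ) : EuclideanSpace ℝ V) i = hH.eigenvalues i * b.repr z i := by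
    intro z i
    rw [b.repr_apply_apply, b.repr_apply_apply, hinner, hinner, WithLp.ofLp_toLp]
    rw [dot_symm hH]
    have haux : ∀ (f : V → ℝ), A *ᵥ f = hH.eigenvalues i • f →
        z ⬝ᵥ A *ᵥ f = hH.eigenvalues i * (f ⬝ᵥ z) := by
      intro f hf
      rw [hf, dotProduct_smul, dotProduct_comm]
      rfl
    exact haux _ (hH.mulVec_eigenvectorBasis i)
  have key : ∀ z : EuclideanSpace ℝ V, b.repr z i₀ = 0 →
      (z : V → ℝ) ⬝ᵥ A *ᵥ (z : V → ℝ) ≤ 0 := by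
    intro z hz
    have h1 : (z : V → ℝ) ⬝ᵥ A *ᵥ (z : V → ℝ)
        = (@inner ℝ _ _ z (WithLp.toLp 2 (A *ᵥ z : V → ℝ) : EuclideanSpace ℝ V)) := (hinner z (WithLp.toLp 2 (A *ᵥ z : V → ℝ))).symm
    rw [h1, ← b.repr.inner_map_map z (WithLp.toLp 2 (A *ᵥ z : V → ℝ) : EuclideanSpace ℝ V)]
    rw [hinner]
    apply Finset.sum_nonpos
    intro i _
    rcases eq_or_ne i i₀ with rfl | hi
    · show b.repr z i * _ ≤ 0
      rw [hz]; simp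
    · show b.repr z i * b.repr (WithLp.toLp 2 (A *ᵥ z : V → ℝ) : EuclideanSpace ℝ V) i ≤ 0
      rw [hrepr]
      have h2 := hi₀ i hi
      nlinarith [sq_nonneg (b.repr z i)]
  have hquad : ∀ s t : ℝ, ¬(s = 0 ∧ t = 0) →
      0 < (s • x + t • y) ⬝ᵥ A *ᵥ (s • x + t • y) := by
    intro s t hst
    rw [quadform_expand hH]
    exact quad_pos hx hy hxy hst
  have hli : LinearIndependent (R := ℝ) (M := EuclideanSpace ℝ V) ![WithLp.toLp 2 x, WithLp.toLp 2 y] := by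
    rw [LinearIndependent.pair_iff]
    intro s t hst
    by_contra hc
    have h0 := hquad s t hc
    have hz : (s • x + t • y : V → ℝ) = 0 := by simpa using congrArg WithLp.ofLp hst
    rw [hz] at h0
    simp [zero_dotProduct] at h0
  set U := Submodule.span ℝ
      ({(WithLp.toLp 2 x : EuclideanSpace ℝ V), (WithLp.toLp 2 y : EuclideanSpace ℝ V)} : Set (EuclideanSpace ℝ V)) with hU
  have hUrank : Module.finrank ℝ U = 2 := by
    have hr : Set.range (![WithLp.toLp 2 x, WithLp.toLp 2 y] : Fin 2 → EuclideanSpace ℝ V)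
        = ({(WithLp.toLp 2 x : EuclideanSpace ℝ V), (WithLp.toLp 2 y : EuclideanSpace ℝ V)} : Set (EuclideanSpace ℝ V)) := by
      ext z
      simp [Fin.exists_fin_two, or_comm]
    have h2 := finrank_span_eq_card (R := ℝ) (M := EuclideanSpace ℝ V) hli
    rw [hr] at h2
    rw [hU]
    simpa using h2
  set f : EuclideanSpace ℝ V →ₗ[ℝ] ℝ :=
    (LinearMap.proj i₀).comp ((WithLp.linearEquiv 2 ℝ (V → ℝ)).toLinearMap.comp b.repr.toLinearEquiv.toLinearMap) with hf
  have hfr : Module.finrank ℝ (LinearMap.range f) ≤ 1 :=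
    le_trans (Submodule.finrank_le _) (by simp)
  have hfk := LinearMap.finrank_range_add_finrank_ker f
  have htop : Module.finrank ℝ (EuclideanSpace ℝ V) = Fintype.card V := finrank_euclideanSpace
  rw [htop] at hfk
  have hsup := Submodule.finrank_sup_add_finrank_inf_eq U (LinearMap.ker f)
  have hUW : Module.finrank ℝ ↥(U ⊔ LinearMap.ker f) ≤ Fintype.card V :=
    le_trans (Submodule.finrank_le _) (le_of_eq htop)
  have hpos : 0 < Module.finrank ℝ ↥(U ⊓ LinearMap.ker f) := by omega
  obtain ⟨z, hz0⟩ : ∃ z : ↥(U ⊓ LinearMap.ker f), z ≠ 0 := by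
    have : Nontrivial ↥(U ⊓ LinearMap.ker f) := Module.finrank_pos_iff.mp hpos
    exact exists_ne 0
  obtain ⟨hzU, hzK⟩ := Submodule.mem_inf.mp z.2
  obtain ⟨s, t, hst⟩ := Submodule.mem_span_pair.mp hzU
  have hker : b.repr (z : EuclideanSpace ℝ V) i₀ = 0 := hzK
  have hQ := key (z : EuclideanSpace ℝ V) hker
  have hz_ne : ¬(s = 0 ∧ t = 0) := by
    rintro ⟨rfl, rfl⟩
    apply hz0
    have h1 : ((z : EuclideanSpace ℝ V)) = 0 := by
      rw [← hst]; simp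
    exact Subtype.ext h1
  have h0 := hquad s t hz_ne
  have heq : (s • x + t • y : V → ℝ) = ((z : EuclideanSpace ℝ V) : V → ℝ) := by simpa using congrArg WithLp.ofLp hst
  rw [heq] at h0
  linarith

section graph
variable {V : Type*} [Fintype V] [DecidableEq V] {G : SimpleGraph V}

lemma dist_le_ecc (G : SimpleGraph V) (u v : V) : G.dist u v ≤ ecc G u :=
  Finset.le_sup (Finset.mem_univ v)

lemma exists_ecc [Nonempty V] (G : SimpleGraph V) (u : V) : ∃ v, ecc G u = G.dist u v := by
  obtain ⟨v, -, hv⟩ := Finset.exists_mem_eq_sup Finset.univ Finset.univ_nonempty (G.dist u)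
  exact ⟨v, hv⟩

lemma antiAdj_apply (G : SimpleGraph V) (u v : V) :
    antiAdj G u v = if G.dist u v = min (ecc G u) (ecc G v) then (G.dist u v : ℝ) else 0 := rfl

lemma antiAdj_diag (G : SimpleGraph V) (u : V) : antiAdj G u u = 0 := by
  rw [antiAdj_apply]
  split <;> simp [SimpleGraph.dist_self]

lemma antiAdj_comm (G : SimpleGraph V) (u v : V) : antiAdj G u v = antiAdj G v u := by
  rw [antiAdj_apply, antiAdj_apply, SimpleGraph.dist_comm, min_comm]

lemma antiAdj_nonneg (G : SimpleGraph V) (u v : V) : 0 ≤ antiAdj G u v := by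
  rw [antiAdj_apply]
  split
  · positivity
  · exact le_refl 0
    
end graph

section main
variable {V : Type*} [Fintype V] [DecidableEq V] {G : SimpleGraph V}

lemma exists_pos_entry [Nontrivial V] (hG : G.Connected) (r : V) :
    ∃ s : V, 0 < antiAdj G r s := by
  obtain ⟨w, hw⟩ := exists_ne r
  obtain ⟨s, hs⟩ := exists_ecc G r
  have h1 : 1 ≤ G.dist r w := hG.pos_dist_of_ne (Ne.symm hw)
  have hecc1 : 1 ≤ ecc G r := le_trans h1 (dist_le_ecc G r w)
  have hds : G.dist r s = ecc G r := hs.symm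
  have hse : ecc G r ≤ ecc G s := by
    calc ecc G r = G.dist s r := by rw [SimpleGraph.dist_comm]; exact hs
    _ ≤ ecc G s := dist_le_ecc G s r
  refine ⟨s, ?_⟩
  rw [antiAdj_apply, if_pos (by rw [hds, min_eq_left hse]), hds]
  exact Nat.cast_pos.mpr (lt_of_lt_of_le zero_lt_one hecc1)

lemma pairForm (M : Matrix V V ℝ) (a c : ℝ) (p q r s : V) :
    ((Pi.single p 1 : V → ℝ) + a • (Pi.single q 1 : V → ℝ)) ⬝ᵥ
      M *ᵥ ((Pi.single r 1 : V → ℝ) + c • (Pi.single s 1 : V → ℝ))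
      = M p r + c * M p s + a * M q r + a * c * M q s := by
  simp [Matrix.mulVec_add, Matrix.mulVec_smul, dotProduct_add, add_dotProduct,
    dotProduct_smul, smul_dotProduct, Matrix.mulVec_single,
    single_dotProduct, smul_eq_mul]
  ring
end main

section crit
variable {V : Type*} [Fintype V] [DecidableEq V] {G : SimpleGraph V}


lemma crit [Nontrivial V] (hG : G.Connected) (hH : (antiAdj G).IsHermitian)
    (hone : (Finset.univ.filter (fun i => 0 < hH.eigenvalues i)).card = 1)
    (p q r : V)
    (hpq : 0 < antiAdj G p q) (hrp : antiAdj G r p = 0) (hrq : antiAdj G r q = 0) : False := by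
  obtain ⟨s, hs⟩ := exists_pos_entry hG r
  set M := antiAdj G with hM
  set C := M p s + M q s with hC
  set t := (M p q * M r s) / (C^2 + 1) with htdef
  have htpos : 0 < t := div_pos (mul_pos hpq hs) (by positivity)
  set x : V → ℝ := (Pi.single p 1 : V → ℝ) + (1:ℝ) • (Pi.single q 1 : V → ℝ) with hx
  set y : V → ℝ := (Pi.single r 1 : V → ℝ) + t • (Pi.single s 1 : V → ℝ) with hy
  have hQx : x ⬝ᵥ M *ᵥ x = 2 * M p q := by
    rw [hx, pairForm, hM, antiAdj_diag G p, antiAdj_diag G q, antiAdj_comm G q p]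
    ring
  have hQy : y ⬝ᵥ M *ᵥ y = 2 * t * M r s := by
    rw [hy, pairForm, hM, antiAdj_diag G r, antiAdj_diag G s, antiAdj_comm G s r]
    ring
  have hB : x ⬝ᵥ M *ᵥ y = t * C := by
    rw [hx, hy, pairForm,
      show M p r = 0 from by rw [hM, antiAdj_comm]; exact hrp,
      show M q r = 0 from by rw [hM, antiAdj_comm]; exact hrq, hC]
    ring
  have hQxpos : 0 < x ⬝ᵥ M *ᵥ x := by rw [hQx]; linarith
  have hQypos : 0 < y ⬝ᵥ M *ᵥ y := by
    rw [hQy]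
    have := mul_pos (mul_pos (by norm_num : (0:ℝ) < 2) htpos) hs
    linarith
  have hlt : (x ⬝ᵥ M *ᵥ y)^2 < (x ⬝ᵥ M *ᵥ x) * (y ⬝ᵥ M *ᵥ y) := by
    rw [hB, hQx, hQy]
    have hP : 0 < M p q * M r s := mul_pos hpq hs
    have h1 : t * C^2 < M p q * M r s := by
      rw [htdef, div_mul_eq_mul_div, div_lt_iff₀ (by positivity)]
      nlinarith [sq_nonneg C]
    nlinarith [mul_lt_mul_of_pos_left h1 htpos, mul_pos htpos hP]
  have h2 := two_le_card_pos hH x y hQxpos hQypos hlt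
  rw [hone] at h2
  omega
end crit

/-- A connected graph with exactly one positive anti-adjacency eigenvalue contains no induced
subgraph isomorphic to `P₃ ∪ K₁` (a path on three vertices `b, c, d` with edges `bc`, `cd`,
together with an isolated vertex `a`). -/
theorem no_induced_P3_union_K1_of_one_positive_antiadjacency_eigenvalue
    {V : Type*} [Fintype V] [DecidableEq V] (G : SimpleGraph V) (hG : G.Connected)
    (hH : (antiAdj G).IsHermitian)
    (hone : (Finset.univ.filter (fun i => 0 < hH.eigenvalues i)).card = 1) :
    ¬ ∃ a b c d : V, a ≠ b ∧ a ≠ c ∧ a ≠ d ∧ b ≠ c ∧ b ≠ d ∧ c ≠ d ∧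
      G.Adj b c ∧ G.Adj c d ∧ ¬ G.Adj b d ∧ ¬ G.Adj a b ∧ ¬ G.Adj a c ∧ ¬ G.Adj a d := by
  rintro ⟨a, b, c, d, hab, hac, had, hbc, hbd, hcd, habc, hacd, hnbd, hnab, hnac, hnad⟩
  haveI : Nonempty V := ⟨a⟩
  haveI : Nontrivial V := ⟨⟨a, b, hab⟩⟩
  have hdbc : G.dist b c = 1 := SimpleGraph.dist_eq_one_iff_adj.mpr habc
  have hdcd : G.dist c d = 1 := SimpleGraph.dist_eq_one_iff_adj.mpr hacd
  have hdbd : G.dist b d = 2 := by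
    have hle := hG.dist_triangle (u := b) (v := c) (w := d)
    rw [hdbc, hdcd] at hle
    have h0 : 0 < G.dist b d := hG.pos_dist_of_ne hbd
    have h1 : G.dist b d ≠ 1 := fun h => hnbd (SimpleGraph.dist_eq_one_iff_adj.mp h)
    omega
  have h2ca : 2 ≤ G.dist c a := by
    have h0 : 0 < G.dist c a := hG.pos_dist_of_ne (Ne.symm hac)
    have h1 : G.dist c a ≠ 1 := fun h =>
      hnac ((SimpleGraph.dist_eq_one_iff_adj.mp h).symm)
    omega
  have heb : 2 ≤ ecc G b := by rw [← hdbd]; exact dist_le_ecc G b d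
  have hed : 2 ≤ ecc G d := by
    have h : G.dist d b = 2 := by rw [SimpleGraph.dist_comm]; exact hdbd
    rw [← h]; exact dist_le_ecc G d b
  have hec : 2 ≤ ecc G c := le_trans h2ca (dist_le_ecc G c a)
  have hAcb : antiAdj G c b = 0 := by
    rw [antiAdj_apply]
    apply if_neg
    rw [SimpleGraph.dist_comm, hdbc]
    have := le_min hec heb
    omega
  have hAcd : antiAdj G c d = 0 := by
    rw [antiAdj_apply]
    apply if_neg
    rw [hdcd]
    have := le_min hec hed
    omega
  by_cases hmin : G.dist b d = min (ecc G b) (ecc G d)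
  · have hAbd : 0 < antiAdj G b d := by
      rw [antiAdj_apply, if_pos hmin, hdbd]
      norm_num
    exact crit hG hH hone b d c hAbd hAcb hAcd
  · have hmge : 2 ≤ min (ecc G b) (ecc G d) := le_min heb hed
    have hne2 : min (ecc G b) (ecc G d) ≠ 2 := fun h => hmin (by rw [hdbd, h])
    have h3b : 3 ≤ ecc G b := le_trans (by omega) (min_le_left (ecc G b) (ecc G d))
    obtain ⟨u, -, hu⟩ := Finset.exists_mem_eq_sup (Finset.univ : Finset V)
      Finset.univ_nonempty (fun u => ecc G u)
    set D := Finset.univ.sup (fun u => ecc G u) with hD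
    have hDb : ecc G b ≤ D := Finset.le_sup (Finset.mem_univ b)
    have hD3 : 3 ≤ D := le_trans h3b hDb
    obtain ⟨v, hv⟩ := exists_ecc G u
    have hecu : ecc G u = D := hu.symm
    have hduv : G.dist u v = D := by rw [← hv, hecu]
    have hecv : ecc G v = D := by
      refine le_antisymm (Finset.le_sup (Finset.mem_univ v)) ?_
      calc D = G.dist v u := by rw [SimpleGraph.dist_comm, hduv]
        _ ≤ ecc G v := dist_le_ecc G v u
    obtain ⟨W, hW⟩ := hG.exists_walk_length_eq_dist u v
    have hlen : W.length = D := by rw [hW, hduv]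
    have hstep : ∀ i k, i + k ≤ W.length → G.dist (W.getVert i) (W.getVert (i+k)) ≤ k := by
      intro i k
      induction k with
      | zero => intro _; simp [SimpleGraph.dist_self]
      | succ n ih =>
        intro h
        have h1 := ih (by omega)
        have h2 : G.Adj (W.getVert (i+n)) (W.getVert (i+n+1)) := W.adj_getVert_succ (by omega)
        have h3 : G.dist (W.getVert (i+n)) (W.getVert (i+n+1)) = 1 :=
          SimpleGraph.dist_eq_one_iff_adj.mpr h2
        calc G.dist (W.getVert i) (W.getVert (i+(n+1)))
            ≤ G.dist (W.getVert i) (W.getVert (i+n)) + G.dist (W.getVert (i+n)) (W.getVert (i+n+1)) :=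
              hG.dist_triangle
          _ ≤ n + 1 := by rw [h3]; omega
    set w := W.getVert 1 with hw
    set w' := W.getVert (D-1) with hw'
    have hgv0 : W.getVert 0 = u := W.getVert_zero
    have hgvD : W.getVert D = v := by rw [← hlen]; exact W.getVert_length
    have huw : G.Adj u w := by
      have h := W.adj_getVert_succ (i := 0) (by omega)
      rwa [hgv0] at h
    have hw'v : G.Adj w' v := by
      have h := W.adj_getVert_succ (i := D-1) (by omega)
      have he : D - 1 + 1 = D := by omega
      rw [he, hgvD] at h
      exact h
    have hduw : G.dist u w = 1 := SimpleGraph.dist_eq_one_iff_adj.mpr huw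
    have hdw'v : G.dist w' v = 1 := SimpleGraph.dist_eq_one_iff_adj.mpr hw'v
    have hdwv : G.dist w v = D - 1 := by
      have hub : G.dist w v ≤ D - 1 := by
        have h := hstep 1 (D-1) (by omega)
        rw [show 1 + (D-1) = D from by omega, hgvD] at h
        exact h
      have hlb := hG.dist_triangle (u := u) (v := w) (w := v)
      rw [hduv, hduw] at hlb
      omega
    have hduw' : G.dist u w' = D - 1 := by
      have hub : G.dist u w' ≤ D - 1 := by
        have h := hstep 0 (D-1) (by omega)
        rw [Nat.zero_add, hgv0] at h
        exact h
      have hlb := hG.dist_triangle (u := u) (v := w') (w := v)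
      rw [hduv, hdw'v] at hlb
      omega
    have hdww' : G.dist w w' = D - 2 := by
      have hub : G.dist w w' ≤ D - 2 := by
        have h := hstep 1 (D-2) (by omega)
        rw [show 1 + (D-2) = D - 1 from by omega] at h
        exact h
      have t1 := hG.dist_triangle (u := u) (v := w) (w := w')
      have t2 := hG.dist_triangle (u := u) (v := w') (w := v)
      rw [hduw] at t1
      rw [hduv, hdw'v] at t2
      omega
    have hecw_ub : ecc G w ≤ D := Finset.le_sup (Finset.mem_univ w)
    have hecw_lb : D - 1 ≤ ecc G w := by rw [← hdwv]; exact dist_le_ecc G w v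
    have hecw'_ub : ecc G w' ≤ D := Finset.le_sup (Finset.mem_univ w')
    have hecw'_lb : D - 1 ≤ ecc G w' := by
      have h : G.dist w' u = D - 1 := by rw [SimpleGraph.dist_comm]; exact hduw'
      rw [← h]; exact dist_le_ecc G w' u
    have hAuv : 0 < antiAdj G u v := by
      rw [antiAdj_apply, if_pos (by rw [hduv, hecu, hecv, min_self]), hduv]
      exact Nat.cast_pos.mpr (by omega)
    by_cases hcw : ecc G w = D
    · have hAwu : antiAdj G w u = 0 := by
        rw [antiAdj_apply]
        apply if_neg
        rw [SimpleGraph.dist_comm, hduw, hcw, hecu, min_self]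
        omega
      have hAwv : antiAdj G w v = 0 := by
        rw [antiAdj_apply]
        apply if_neg
        rw [hdwv, hcw, hecv, min_self]
        omega
      exact crit hG hH hone u v w hAuv hAwu hAwv
    · by_cases hcw2 : ecc G w' = D
      · have hAw'u : antiAdj G w' u = 0 := by
          rw [antiAdj_apply]
          apply if_neg
          rw [SimpleGraph.dist_comm, hduw', hcw2, hecu, min_self]
          omega
        have hAw'v : antiAdj G w' v = 0 := by
          rw [antiAdj_apply]
          apply if_neg
          rw [hdw'v, hcw2, hecv, min_self]
          omega
        exact crit hG hH hone u v w' hAuv hAw'u hAw'v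
      · have hew : ecc G w = D - 1 := by omega
        have hew' : ecc G w' = D - 1 := by omega
        have hAwv : 0 < antiAdj G w v := by
          rw [antiAdj_apply, if_pos (by rw [hdwv, hew, hecv, min_eq_left (by omega)]), hdwv]
          exact Nat.cast_pos.mpr (by omega)
        have hAw'w : antiAdj G w' w = 0 := by
          rw [antiAdj_apply]
          apply if_neg
          have h : G.dist w' w = D - 2 := by rw [SimpleGraph.dist_comm]; exact hdww'
          rw [h, hew, hew', min_self]
          omega
        have hAw'v : antiAdj G w' v = 0 := by
          rw [antiAdj_apply]
          apply if_neg
          rw [hdw'v, hew', hecv, min_eq_left (by omega)]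
          omega
        exact crit hG hH hone w v w' hAwv hAw'w hAw'v
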